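/- Let c₂, c₃, ε > 0 with c₂ < c₃·2^{ν₀} for some integer ν₀, let Δ be an interval and γ > 0, and let S̄, S̿ be nonnegative measurable functions on Δ satisfying: (c₁/ε)·∫_Δ S̿ ≤ c₂ γ |Δ| ≤ ∫_Δ S̄ and ‖S̄‖_{L^∞(Δ)} ≤ c₃ γ 2^{ν₀}, where c₁ > 0 is a constant. If ε < c₁ c₂ / (32 c₃ 2^{ν₀}), then |{x ∈ Δ : S̄(x) > 8 S̿(x)}| ≥ (c₂/(2 c₃ 2^{ν₀})) |Δ|. -/

import Mathlib

open MeasureTheory Set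

/-- Measure-theoretic core of Lemma 7: if `S̄` has average at least `c₂γ` and sup at
most `c₃γ2^{ν₀}` on the interval `Δ = (a,b]`, while `S̿` has small average
(`(c₁/ε)∫S̿ ≤ c₂γ|Δ|` with `ε < c₁c₂/(32 c₃ 2^{ν₀})`), then `S̄ > 8 S̿` on a subset
of `Δ` of measure at least `(c₂/(2c₃2^{ν₀}))|Δ|`. -/
theorem stmt_18 (c₁ c₂ c₃ ε γ : ℝ) (ν : ℤ)
    (hc₁ : 0 < c₁) (hc₂ : 0 < c₂) (hc₃ : 0 < c₃) (hε : 0 < ε) (hγ : 0 < γ)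
    (hlt : c₂ < c₃ * 2 ^ ν)
    (a b : ℝ) (hab : a < b)
    (S1 S2 : ℝ → ℝ) (hS1m : Measurable S1) (hS2m : Measurable S2)
    (hS1nn : ∀ x ∈ Set.Ioc a b, 0 ≤ S1 x) (hS2nn : ∀ x ∈ Set.Ioc a b, 0 ≤ S2 x)
    (hS2int : IntegrableOn S2 (Set.Ioc a b) volume)
    (h1 : (c₁ / ε) * ∫ x in Set.Ioc a b, S2 x ≤ c₂ * γ * (b - a))
    (h2 : c₂ * γ * (b - a) ≤ ∫ x in Set.Ioc a b, S1 x)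
    (hsup : ∀ x ∈ Set.Ioc a b, S1 x ≤ c₃ * γ * 2 ^ ν)
    (hεsmall : ε < c₁ * c₂ / (32 * c₃ * 2 ^ ν)) :
    ENNReal.ofReal (c₂ / (2 * c₃ * 2 ^ ν) * (b - a)) ≤
      volume {x ∈ Set.Ioc a b | 8 * S2 x < S1 x} := by
  set T := Set.Ioc a b with hT
  set A := {x ∈ Set.Ioc a b | 8 * S2 x < S1 x} with hAdef
  have h2pos : (0:ℝ) < (2:ℝ) ^ ν := by positivity
  have hM : (0:ℝ) < c₃ * 2 ^ ν := by positivity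
  have hTm : MeasurableSet T := measurableSet_Ioc
  have hAT : A ⊆ T := fun x hx => hx.1
  have hAm : MeasurableSet A := by
    have : A = T ∩ {x | 8 * S2 x < S1 x} := rfl
    rw [this]
    exact hTm.inter (measurableSet_lt (hS2m.const_mul 8) hS1m)
  have hTfin : volume T < ⊤ := measure_Ioc_lt_top
  -- integrability of S1
  have hS1int : IntegrableOn S1 T volume := by
    apply Measure.integrableOn_of_bounded hTfin.ne hS1m.aestronglyMeasurable
    · filter_upwards [ae_restrict_mem hTm] with x hx
      rw [Real.norm_eq_abs, abs_of_nonneg (hS1nn x hx)]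
      exact hsup x hx
  have h8S2int : IntegrableOn (fun x => 8 * S2 x) T volume := hS2int.const_mul 8
  set R := c₂ * γ * (b - a) with hR
  have hRpos : 0 < R := by
    have : 0 < b - a := sub_pos.2 hab
    positivity
  have hI2nn : 0 ≤ ∫ x in T, S2 x :=
    setIntegral_nonneg hTm hS2nn
  -- ε is small: 16 ε ≤ c₁
  have hε16 : 16 * ε ≤ c₁ := by
    rw [lt_div_iff₀ (by positivity)] at hεsmall
    nlinarith [mul_pos hc₁ (sub_pos.2 hlt), hε.le]
  -- 8 ∫ S2 ≤ R / 2
  have hI2 : (∫ x in T, S2 x) * c₁ ≤ R * ε := by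
    have := mul_le_mul_of_nonneg_left h1 hε.le
    have hεne : ε ≠ 0 := hε.ne'
    calc (∫ x in T, S2 x) * c₁ = ε * (c₁ / ε * ∫ x in T, S2 x) := by
          field_simp
      _ ≤ ε * R := this
      _ = R * ε := mul_comm _ _
  -- lower bound on ∫ (S1 - 8 S2)
  have hlow : R / 2 ≤ ∫ x in T, (S1 x - 8 * S2 x) := by
    rw [integral_sub hS1int h8S2int, integral_const_mul]
    nlinarith [hI2, h2, mul_le_mul_of_nonneg_left hε16 hRpos.le]
  -- upper bound : pointwise f ≤ indicator
  have hub : ∫ x in T, (S1 x - 8 * S2 x) ≤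
      ∫ x in T, A.indicator (fun _ => c₃ * γ * 2 ^ ν) x := by
    apply setIntegral_mono_on (hS1int.sub h8S2int)
      ((integrableOn_const hTfin.ne).indicator hAm) hTm
    intro x hx
    simp only [Pi.sub_apply]
    by_cases hxA : x ∈ A
    · rw [Set.indicator_of_mem hxA]
      have := hS2nn x hx
      have := hsup x hx
      linarith
    · rw [Set.indicator_of_notMem hxA]
      have : ¬ (8 * S2 x < S1 x) := fun h => hxA ⟨hx, h⟩
      linarith [not_lt.1 this]
  have hind : ∫ x in T, A.indicator (fun _ => c₃ * γ * 2 ^ ν) x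
      = (c₃ * γ * 2 ^ ν) * (volume A).toReal := by
    rw [integral_indicator hAm, setIntegral_const, measureReal_def, Measure.restrict_apply hAm,
      Set.inter_eq_left.2 hAT, smul_eq_mul, mul_comm]
  -- combine
  have hAfin : volume A ≠ ⊤ := ((measure_mono hAT).trans_lt hTfin).ne
  have hkey : c₂ / (2 * c₃ * 2 ^ ν) * (b - a) ≤ (volume A).toReal := by
    have h3 : R / 2 ≤ (c₃ * γ * 2 ^ ν) * (volume A).toReal := by
      rw [← hind]; exact hlow.trans hub
    rw [div_mul_eq_mul_div, div_le_iff₀ (by positivity)]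
    have hAnn : 0 ≤ (volume A).toReal := ENNReal.toReal_nonneg
    nlinarith [h3]
  exact ENNReal.ofReal_le_of_le_toReal hkey
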